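/- Let G be a connected finite graph and L a degree-list assignment (|L(x)| ≥ deg_G(x) for all x). Let g be a proper partial L-coloring of G. If G has no proper total L-coloring f with |f⁻¹(α)| ≥ |g⁻¹(α)| for every color α, then |L(x)| = deg_G(x) for every vertex x. -/

import Mathlib

open Finset

/-- Auxiliary: if every color in a vertex's list appears on a neighbor, then the list
is no bigger than the degree, and we get a "selector" function. -/
lemma tight_aux {V C : Type*} [Fintype V] [DecidableEq V] [DecidableEq C]
    (G : SimpleGraph V) [DecidableRel G.Adj] (L : V → Finset C) (g : V → Option C)
    (u : V) (h2 : ∀ c ∈ L u, ∃ w, G.Adj u w ∧ g w = some c) :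
    ∃ φ : C → V, (∀ c ∈ L u, G.Adj u (φ c) ∧ g (φ c) = some c) ∧
      Set.InjOn φ (L u) ∧ (L u).card ≤ G.degree u := by
  have h2' : ∀ c : C, ∃ w, c ∈ L u → G.Adj u w ∧ g w = some c := by
    intro c
    by_cases hc : c ∈ L u
    · obtain ⟨w, hw⟩ := h2 c hc
      exact ⟨w, fun _ => hw⟩
    · exact ⟨u, fun h => absurd h hc⟩
  choose φ hφ using h2'
  have hinj : Set.InjOn φ (L u) := by
    intro c hc c' hc' he
    rw [Finset.mem_coe] at hc hc'
    have h1 := (hφ c hc).2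
    have h2 := (hφ c' hc').2
    rw [he, h2] at h1
    exact (Option.some_injective _ h1).symm
  refine ⟨φ, hφ, hinj, ?_⟩
  rw [← SimpleGraph.card_neighborFinset_eq_degree]
  apply Finset.card_le_card_of_injOn φ
  · intro c hc
    rw [Finset.mem_coe, SimpleGraph.mem_neighborFinset]
    exact (hφ c hc).1
  · exact hinj

lemma key_lemma {V C : Type*} [Fintype V] [DecidableEq V] [DecidableEq C]
    (G : SimpleGraph V) [DecidableRel G.Adj] (hconn : G.Connected)
    (L : V → Finset C) (hL : ∀ v, G.degree v ≤ (L v).card)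
    (x : V) (hx : G.degree x < (L x).card) :
    ∀ n (g : V → Option C),
      (∑ v ∈ Finset.univ.filter (fun v => g v = none), (G.dist x v + 1)) = n →
      (∀ v c, g v = some c → c ∈ L v) →
      (∀ a b, G.Adj a b → ∀ c, g a = some c → g b ≠ some c) →
      ∃ f : V → C, (∀ v, f v ∈ L v) ∧ (∀ a b, G.Adj a b → f a ≠ f b) ∧
        (∀ α : C, (Finset.univ.filter fun v => g v = some α).card ≤
          (Finset.univ.filter fun v => f v = α).card) := by
  intro n
  induction n using Nat.strong_induction_on with
  | _ n IH =>
  intro g hμ hgL hgproper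
  by_cases hTotal : ∀ v, ∃ c, g v = some c
  · -- g is total; take f = g
    choose f hf using hTotal
    refine ⟨f, fun v => hgL v (f v) (hf v), ?_, ?_⟩
    · intro a b hab he
      exact hgproper a b hab (f a) (hf a) (by rw [he]; exact hf b)
    · intro α
      apply Finset.card_le_card
      intro v hv
      simp only [Finset.mem_filter, Finset.mem_univ, true_and] at hv ⊢
      have := hf v
      rw [hv] at this
      exact (Option.some_injective _ this).symm
  · by_cases hfree : ∃ u c, g u = none ∧ c ∈ L u ∧ ∀ w, G.Adj u w → g w ≠ some c
    · -- extend g at u by c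
      obtain ⟨u, c, hu, hcL, hfreec⟩ := hfree
      set g' : V → Option C := fun v => if v = u then some c else g v with hg'
      have hg'u : g' u = some c := by simp [hg']
      have hg'v : ∀ v, v ≠ u → g' v = g v := by intro v hv; simp [hg', hv]
      have hgL' : ∀ v d, g' v = some d → d ∈ L v := by
        intro v d h
        by_cases hv : v = u
        · subst hv; rw [hg'u] at h
          rw [← Option.some_injective _ h]; exact hcL
        · rw [hg'v v hv] at h; exact hgL v d h
      have hgproper' : ∀ a b, G.Adj a b → ∀ d, g' a = some d → g' b ≠ some d := by
        intro a b hab d ha hb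
        have hne : a ≠ b := G.ne_of_adj hab
        by_cases hau : a = u
        · rw [hau, hg'u] at ha
          have hd : c = d := Option.some_injective _ ha
          have hbu : b ≠ u := fun h => hne (hau.trans h.symm)
          rw [hg'v b hbu, ← hd] at hb
          have hab' : G.Adj u b := by rw [← hau]; exact hab
          exact hfreec b hab' hb
        · rw [hg'v a hau] at ha
          by_cases hbu : b = u
          · rw [hbu, hg'u] at hb
            have hd : c = d := Option.some_injective _ hb
            rw [← hd] at ha
            have hab' : G.Adj u a := by rw [← hbu]; exact G.adj_symm hab
            exact hfreec a hab' ha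
          · rw [hg'v b hbu] at hb
            exact hgproper a b hab d ha hb
      -- measure decreases
      have huin : u ∈ Finset.univ.filter (fun v => g v = none) := by
        simp [hu]
      have hunc : Finset.univ.filter (fun v => g' v = none) =
          (Finset.univ.filter (fun v => g v = none)).erase u := by
        ext v
        simp only [Finset.mem_filter, Finset.mem_univ, true_and, Finset.mem_erase]
        constructor
        · intro h
          have hvu : v ≠ u := by
            intro hvu; subst hvu; rw [hg'u] at h; exact nomatch h
          exact ⟨hvu, by rwa [hg'v v hvu] at h⟩
        · intro ⟨hvu, h⟩
          rw [hg'v v hvu]; exact h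
      have hsum : (∑ v ∈ (Finset.univ.filter (fun v => g v = none)).erase u,
            (G.dist x v + 1)) + (G.dist x u + 1) = n := by
        rw [Finset.sum_erase_add _ _ huin]; exact hμ
      have hμ' : (∑ v ∈ Finset.univ.filter (fun v => g' v = none), (G.dist x v + 1)) < n := by
        rw [hunc]; omega
      obtain ⟨f, hf1, hf2, hf3⟩ := IH _ hμ' g' rfl hgL' hgproper'
      refine ⟨f, hf1, hf2, ?_⟩
      intro α
      refine le_trans (Finset.card_le_card ?_) (hf3 α)
      intro v hv
      simp only [Finset.mem_filter, Finset.mem_univ, true_and] at hv ⊢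
      have hvu : v ≠ u := by
        intro h; subst h; rw [hv] at hu; exact nomatch hu
      rw [hg'v v hvu]; exact hv
    · -- every uncolored vertex is "tight": shift a color towards x
      push_neg at hfree
      have hfree' : ∀ u, g u = none → ∀ c ∈ L u, ∃ w, G.Adj u w ∧ g w = some c := by
        intro u hu c hc
        exact hfree u c hu hc
      push_neg at hTotal
      obtain ⟨u, hu⟩ := hTotal
      have hu : g u = none := by
        cases hgu : g u with
        | none => rfl
        | some c => exact absurd hgu (hu c)
      obtain ⟨φ, hφ, hinj, hcard⟩ := tight_aux G L g u (hfree' u hu)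
      have hcardeq : (L u).card = G.degree u := le_antisymm hcard (hL u)
      -- u ≠ x
      have hux : u ≠ x := by
        intro h; subst h
        exact absurd hcardeq (by omega)
      -- the image of φ is all of the neighborhood
      have himg : Finset.image φ (L u) = G.neighborFinset u := by
        apply Finset.eq_of_subset_of_card_le
        · intro v hv
          rw [Finset.mem_image] at hv
          obtain ⟨c, hc, rfl⟩ := hv
          rw [SimpleGraph.mem_neighborFinset]
          exact (hφ c hc).1
        · rw [SimpleGraph.card_neighborFinset_eq_degree, ← hcardeq,
            Finset.card_image_of_injOn hinj]
      -- find a neighbor w of u strictly closer to x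
      have hdistpos : G.dist x u ≠ 0 := by
        have := hconn.pos_dist_of_ne (Ne.symm hux)
        omega
      obtain ⟨p, hp⟩ := (hconn x u).exists_walk_length_eq_dist
      obtain ⟨w, hadj, q, hq⟩ := SimpleGraph.Walk.exists_eq_cons_of_ne hux p.reverse
      have hlen : G.dist x u = q.length + 1 := by
        have h1 : p.reverse.length = p.length := SimpleGraph.Walk.length_reverse p
        rw [hq, SimpleGraph.Walk.length_cons] at h1
        omega
      have hdw : G.dist x w < G.dist x u := by
        have := SimpleGraph.dist_le q.reverse
        rw [SimpleGraph.Walk.length_reverse] at this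
        omega
      -- w is colored, with a color β ∈ L u
      have hwmem : w ∈ Finset.image φ (L u) := by
        rw [himg, SimpleGraph.mem_neighborFinset]; exact hadj
      rw [Finset.mem_image] at hwmem
      obtain ⟨β, hβL, hβw⟩ := hwmem
      have hgw : g w = some β := hβw ▸ (hφ β hβL).2
      -- uniqueness: w is the only neighbor of u colored β
      have huniq : ∀ z, G.Adj u z → g z = some β → z = w := by
        intro z hz hgz
        have hzmem : z ∈ Finset.image φ (L u) := by
          rw [himg, SimpleGraph.mem_neighborFinset]; exact hz
        rw [Finset.mem_image] at hzmem
        obtain ⟨c, hcL, hcz⟩ := hzmem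
        have : g z = some c := hcz ▸ (hφ c hcL).2
        rw [hgz] at this
        have hβc : β = c := Option.some_injective _ this
        rw [← hcz, ← hβc]
        exact hβw
      have huw : u ≠ w := G.ne_of_adj hadj
      -- define shifted coloring
      set g' : V → Option C := fun v => if v = u then some β else if v = w then none else g v
        with hg'
      have hg'u : g' u = some β := by simp [hg']
      have hg'w : g' w = none := by simp [hg', Ne.symm huw]
      have hg'v : ∀ v, v ≠ u → v ≠ w → g' v = g v := by
        intro v h1 h2; simp [hg', h1, h2]
      have hgL' : ∀ v d, g' v = some d → d ∈ L v := by
        intro v d h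
        by_cases h1 : v = u
        · subst h1; rw [hg'u] at h
          rw [← Option.some_injective _ h]; exact hβL
        · by_cases h2 : v = w
          · subst h2; rw [hg'w] at h; exact nomatch h
          · rw [hg'v v h1 h2] at h; exact hgL v d h
      have hgproper' : ∀ a b, G.Adj a b → ∀ d, g' a = some d → g' b ≠ some d := by
        have main : ∀ b, G.Adj u b → ∀ d, g' u = some d → g' b ≠ some d := by
          intro b hab d ha hb
          rw [hg'u] at ha
          have hd : d = β := (Option.some_injective _ ha).symm
          subst hd
          have hbu : b ≠ u := fun h => G.ne_of_adj hab h.symm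
          by_cases hbw : b = w
          · subst hbw; rw [hg'w] at hb; exact nomatch hb
          · rw [hg'v b hbu hbw] at hb
            exact hbw (huniq b hab hb)
        intro a b hab d ha hb
        by_cases hau : a = u
        · subst hau; exact main b hab d ha hb
        · by_cases hbu : b = u
          · subst hbu
            exact main a (G.adj_symm hab) d hb ha
          · by_cases haw : a = w
            · subst haw; rw [hg'w] at ha; exact nomatch ha
            · by_cases hbw : b = w
              · subst hbw; rw [hg'w] at hb; exact nomatch hb
              · rw [hg'v a hau haw] at ha
                rw [hg'v b hbu hbw] at hb
                exact hgproper a b hab d ha hb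
      -- measure
      have huin : u ∈ Finset.univ.filter (fun v => g v = none) := by simp [hu]
      have hwnot : w ∉ (Finset.univ.filter (fun v => g v = none)).erase u := by
        simp [hgw]
      have hunc : Finset.univ.filter (fun v => g' v = none) =
          insert w ((Finset.univ.filter (fun v => g v = none)).erase u) := by
        ext v
        simp only [Finset.mem_filter, Finset.mem_univ, true_and, Finset.mem_insert,
          Finset.mem_erase]
        constructor
        · intro h
          by_cases h2 : v = w
          · exact Or.inl h2
          · have h1 : v ≠ u := by
              intro h1; subst h1; rw [hg'u] at h; exact nomatch h
            rw [hg'v v h1 h2] at h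
            exact Or.inr ⟨h1, h⟩
        · intro h
          rcases h with rfl | ⟨h1, h2⟩
          · exact hg'w
          · have h2' : v ≠ w := by
              intro hvw; subst hvw; rw [hgw] at h2; exact nomatch h2
            rw [hg'v v h1 h2']; exact h2
      have hsum : (∑ v ∈ (Finset.univ.filter (fun v => g v = none)).erase u,
            (G.dist x v + 1)) + (G.dist x u + 1) = n := by
        rw [Finset.sum_erase_add _ _ huin]; exact hμ
      have hμ' : (∑ v ∈ Finset.univ.filter (fun v => g' v = none), (G.dist x v + 1)) < n := by
        rw [hunc, Finset.sum_insert hwnot]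
        omega
      obtain ⟨f, hf1, hf2, hf3⟩ := IH _ hμ' g' rfl hgL' hgproper'
      refine ⟨f, hf1, hf2, ?_⟩
      intro α
      refine le_trans ?_ (hf3 α)
      -- class of g' has same card as class of g
      by_cases hαβ : α = β
      · subst hαβ
        have hset : Finset.univ.filter (fun v => g' v = some α) =
            insert u ((Finset.univ.filter (fun v => g v = some α)).erase w) := by
          ext v
          simp only [Finset.mem_filter, Finset.mem_univ, true_and, Finset.mem_insert,
            Finset.mem_erase]
          constructor
          · intro h
            by_cases h1 : v = u
            · exact Or.inl h1
            · by_cases h2 : v = w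
              · subst h2; rw [hg'w] at h; exact nomatch h
              · rw [hg'v v h1 h2] at h
                exact Or.inr ⟨h2, h⟩
          · intro h
            rcases h with rfl | ⟨h1, h2⟩
            · exact hg'u
            · have h1' : v ≠ u := by
                intro hvu; subst hvu; rw [hu] at h2; exact nomatch h2
              rw [hg'v v h1' h1]; exact h2
        rw [hset]
        have hwin : w ∈ Finset.univ.filter (fun v => g v = some α) := by simp [hgw]
        have hunot : u ∉ (Finset.univ.filter (fun v => g v = some α)).erase w := by
          simp [hu]
        rw [Finset.card_insert_of_notMem hunot,
          Finset.card_erase_of_mem hwin]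
        have : 0 < (Finset.univ.filter (fun v => g v = some α)).card :=
          Finset.card_pos.mpr ⟨w, hwin⟩
        omega
      · apply le_of_eq
        congr 1
        ext v
        simp only [Finset.mem_filter, Finset.mem_univ, true_and]
        by_cases h1 : v = u
        · rw [h1, hu, hg'u]
          constructor
          · intro h; exact nomatch h
          · intro h; exact absurd (Option.some_injective _ h).symm hαβ
        · by_cases h2 : v = w
          · rw [h2, hgw, hg'w]
            constructor
            · intro h; exact absurd (Option.some_injective _ h).symm hαβ
            · intro h; exact nomatch h
          · rw [hg'v v h1 h2]

/-- Let G be a connected finite graph, L a degree-list assignment, g a proper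
partial L-coloring. If G has no proper total L-coloring dominating g, then |L(x)| = deg(x)
for every vertex x. -/
theorem stmt_10 {V C : Type*} [Fintype V] [DecidableEq V] [DecidableEq C]
    (G : SimpleGraph V) [DecidableRel G.Adj] (hconn : G.Connected)
    (L : V → Finset C) (hL : ∀ x, G.degree x ≤ (L x).card)
    (g : V → Option C)
    (hgL : ∀ x c, g x = some c → c ∈ L x)
    (hgproper : ∀ x y, G.Adj x y → ∀ c : C, g x = some c → g y ≠ some c)
    (hno : ¬ ∃ f : V → C,
      (∀ x, f x ∈ L x) ∧
      (∀ x y, G.Adj x y → f x ≠ f y) ∧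
      (∀ α : C, (Finset.univ.filter fun x => g x = some α).card ≤
        (Finset.univ.filter fun x => f x = α).card)) :
    ∀ x, (L x).card = G.degree x := by
  intro x
  by_contra h
  have hx : G.degree x < (L x).card := lt_of_le_of_ne (hL x) (Ne.symm h)
  exact hno (key_lemma G hconn L hL x hx _ g rfl hgL hgproper)
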